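/- Let H be the Sylvester Hadamard matrix of order n = 2^p with p ∈ {1,2,3,4}, and let k ∈ {1,…,p-1}. For any subset α of rows of H with |α| = 2^k, there exists at least one column j of H such that ∑_{i∈α} H(i,j) = 0. -/

import Mathlib

def ip (p : ℕ) (g h : Fin p → ZMod 2) : ℕ := ∑ i, (g i * h i).val

/-- The Sylvester Hadamard matrix of order `2^p` in cocyclic form. -/
def sylv (p : ℕ) : Matrix (Fin p → ZMod 2) (Fin p → ZMod 2) ℤ :=
  fun g h => (-1) ^ ip p g h

namespace SylvAux
variable {p : ℕ}

def bf (g h : Fin p → ZMod 2) : ZMod 2 := ∑ i, g i * h i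

lemma bf_add_left (g g' h : Fin p → ZMod 2) : bf (g + g') h = bf g h + bf g' h := by
  simp [bf, add_mul, Finset.sum_add_distrib]

lemma bf_add_right (g h h' : Fin p → ZMod 2) : bf g (h + h') = bf g h + bf g h' := by
  simp [bf, mul_add, Finset.sum_add_distrib]

lemma bf_zero_left (h : Fin p → ZMod 2) : bf 0 h = 0 := by simp [bf]

lemma bf_sum_left (s : Finset (Fin p → ZMod 2)) (h : Fin p → ZMod 2) :
    bf (∑ g ∈ s, g) h = ∑ g ∈ s, bf g h := by
  classical
  induction s using Finset.induction with
  | empty => simp [bf_zero_left]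
  | insert _ _ hx ih => rw [Finset.sum_insert hx, bf_add_left, ih, Finset.sum_insert hx]

lemma key1 : ∀ x y : ZMod 2,
    (1 - 2*((x.val:ℤ))) * (1 - 2*((y.val:ℤ))) = 1 - 2*(((x+y).val:ℤ)) := by decide

lemma key2 : ∀ x : ZMod 2, 1 - 2*(((x+1).val:ℤ)) = -(1 - 2*((x.val:ℤ))) := by decide

lemma add_self (g : Fin p → ZMod 2) : g + g = 0 := by
  funext i
  exact (show ∀ x : ZMod 2, x + x = 0 by decide) (g i)


lemma ip_cast (g h : Fin p → ZMod 2) : ((ip p g h : ℕ) : ZMod 2) = bf g h := by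
  simp [ip, bf, Nat.cast_sum, ZMod.natCast_val, ZMod.cast_id']

lemma neg_one_pow (n : ℕ) : ((-1:ℤ))^n = 1 - 2 * (((n : ZMod 2)).val : ℤ) := by
  rcases Nat.even_or_odd n with he | ho
  · obtain ⟨m, rfl⟩ := he
    rw [Even.neg_one_pow ⟨m, rfl⟩]
    have : ((m + m : ℕ) : ZMod 2) = 0 := by
      push_cast; ring_nf; rw [show (2:ZMod 2) = 0 by decide]; ring
    rw [this, show ((0:ZMod 2).val : ℤ) = 0 by decide]; ring
  · obtain ⟨m, rfl⟩ := ho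
    rw [Odd.neg_one_pow ⟨m, rfl⟩]
    have : ((2*m + 1 : ℕ) : ZMod 2) = 1 := by
      push_cast; rw [show (2:ZMod 2) = 0 by decide]; ring
    rw [this, show ((1:ZMod 2).val : ℤ) = 1 by decide]; ring

lemma sylv_eq (g h : Fin p → ZMod 2) : sylv p g h = 1 - 2 * ((bf g h).val : ℤ) := by
  rw [sylv, neg_one_pow, ip_cast]


lemma cardV : Fintype.card (Fin p → ZMod 2) = 2^p := by simp [ZMod.card]

lemma sylv_zero (h : Fin p → ZMod 2) : sylv p 0 h = 1 := by
  rw [sylv_eq, bf_zero_left]; simp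

lemma sylv_mul (g g' h : Fin p → ZMod 2) :
    sylv p g h * sylv p g' h = sylv p (g + g') h := by
  rw [sylv_eq, sylv_eq, sylv_eq, bf_add_left, key1]

lemma exists_delta (σ : Fin p → ZMod 2) (hσ : σ ≠ 0) :
    ∃ δ : Fin p → ZMod 2, bf σ δ = 1 := by
  obtain ⟨i0, hi0⟩ := Function.ne_iff.mp hσ
  refine ⟨Pi.single i0 1, ?_⟩
  have h1 : σ i0 = 1 := by
    have := (show ∀ x : ZMod 2, x ≠ 0 → x = 1 by decide) (σ i0)
    exact this hi0
  simp [bf, Pi.single_apply, mul_ite, Finset.sum_ite_eq', h1]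

lemma char_sum (σ : Fin p → ZMod 2) (hσ : σ ≠ 0) : ∑ h, sylv p σ h = 0 := by
  obtain ⟨δ, hδ⟩ := exists_delta σ hσ
  have e1 : ∑ h, sylv p σ (h + δ) = ∑ h, sylv p σ h :=
    Fintype.sum_equiv (Equiv.addRight δ) _ _ (fun h => rfl)
  have e2 : ∀ h, sylv p σ (h + δ) = - sylv p σ h := by
    intro h
    rw [sylv_eq, sylv_eq, bf_add_right, hδ]
    exact key2 _
  have : ∑ h, sylv p σ (h + δ) = - ∑ h, sylv p σ h := by
    rw [Finset.sum_congr rfl (fun h _ => e2 h), Finset.sum_neg_distrib]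
  rw [e1] at this
  linarith

lemma parseval (α : Finset (Fin p → ZMod 2)) :
    ∑ h, (∑ g ∈ α, sylv p g h)^2 = 2^p * α.card := by
  classical
  have inner : ∀ g g' : Fin p → ZMod 2,
      ∑ h, sylv p g h * sylv p g' h = if g = g' then (2^p : ℤ) else 0 := by
    intro g g'
    by_cases hgg : g = g'
    · subst hgg
      simp only [if_pos rfl, sylv_mul, add_self, sylv_zero]
      simp [cardV]
    · rw [if_neg hgg]
      have hne : g + g' ≠ 0 := by
        intro h0
        apply hgg
        have : g + (g' + g') = (g + g') + g' := by ring
        rw [add_self, h0] at this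
        simpa using this
      calc ∑ h, sylv p g h * sylv p g' h = ∑ h, sylv p (g + g') h := by
            exact Finset.sum_congr rfl (fun h _ => sylv_mul g g' h)
        _ = 0 := char_sum _ hne
  calc ∑ h, (∑ g ∈ α, sylv p g h)^2
      = ∑ h, ∑ g ∈ α, ∑ g' ∈ α, sylv p g h * sylv p g' h := by
        refine Finset.sum_congr rfl (fun h _ => ?_)
        rw [sq, Finset.sum_mul_sum]
    _ = ∑ g ∈ α, ∑ g' ∈ α, ∑ h, sylv p g h * sylv p g' h := by
        rw [Finset.sum_comm]
        exact Finset.sum_congr rfl (fun g _ => Finset.sum_comm)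
    _ = ∑ g ∈ α, ∑ g' ∈ α, if g = g' then (2^p : ℤ) else 0 := by
        exact Finset.sum_congr rfl (fun g _ => Finset.sum_congr rfl (fun g' _ => inner g g'))
    _ = ∑ g ∈ α, if g ∈ α then (2^p : ℤ) else 0 := by
        exact Finset.sum_congr rfl (fun g hg => Finset.sum_ite_eq α g _)
    _ = 2^p * α.card := by
        rw [Finset.sum_congr rfl (fun g hg => if_pos hg)]
        simp [mul_comm]

lemma one_le_sq (m : ℤ) (hm : m ≠ 0) : 1 ≤ m^2 := by
  have h1 : m^2 ≠ 0 := pow_ne_zero 2 hm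
  have h2 : 0 ≤ m^2 := sq_nonneg m
  omega

lemma sq_ge_four (s : ℤ) (h2 : (2:ℤ) ∣ s) (h0 : s ≠ 0) : 4 ≤ s^2 := by
  obtain ⟨m, rfl⟩ := h2
  have hm : m ≠ 0 := by rintro rfl; simp at h0
  have := one_le_sq m hm
  nlinarith

lemma sq_ge_sixteen (s : ℤ) (h4 : (4:ℤ) ∣ s) (h0 : s ≠ 0) : 16 ≤ s^2 := by
  obtain ⟨m, rfl⟩ := h4
  have hm : m ≠ 0 := by rintro rfl; simp at h0
  have := one_le_sq m hm
  nlinarith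

end SylvAux

open SylvAux in
theorem sylvester_subrows_vanishing_column (p k : ℕ) (hp : p ∈ ({1, 2, 3, 4} : Set ℕ))
    (hk1 : 1 ≤ k) (hk2 : k < p) (α : Finset (Fin p → ZMod 2)) (hα : α.card = 2 ^ k) :
    ∃ h : Fin p → ZMod 2, ∑ g ∈ α, sylv p g h = 0 := by
  classical
  by_contra hno
  push_neg at hno
  have hp4 : p ≤ 4 := by
    simp only [Set.mem_insert_iff, Set.mem_singleton_iff] at hp
    omega
  have hk3 : k ≤ 3 := by omega
  have hp1 : 1 ≤ p := by omega
  set S : (Fin p → ZMod 2) → ℤ := fun h => ∑ g ∈ α, sylv p g h with hS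
  set W : (Fin p → ZMod 2) → ℤ := fun h => ∑ g ∈ α, ((bf g h).val : ℤ) with hW
  have hSW : ∀ h, S h = (2:ℤ)^k - 2 * W h := by
    intro h
    simp only [hS, hW]
    rw [Finset.sum_congr rfl (fun g (_ : g ∈ α) => sylv_eq g h),
      Finset.sum_sub_distrib, ← Finset.mul_sum, Finset.sum_const, hα]
    push_cast
    ring
  set σ : Fin p → ZMod 2 := ∑ g ∈ α, g with hσdef
  have hWcast : ∀ h, ((W h : ℤ) : ZMod 2) = bf σ h := by
    intro h
    rw [hσdef, bf_sum_left]
    push_cast [hW]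
    refine Finset.sum_congr rfl (fun g _ => ?_)
    simp [ZMod.natCast_val, ZMod.cast_id']
  set c : ZMod 2 := ((2^(k-1) : ℕ) : ZMod 2) with hc
  set B : Finset (Fin p → ZMod 2) := Finset.univ.filter (fun h => bf σ h = c) with hB
  -- every S h is divisible by 2; on B it is divisible by 4
  have hfactor : ∀ h, S h = 2 * ((2:ℤ)^(k-1) - W h) := by
    intro h
    rw [hSW h]
    have : (2:ℤ)^k = 2 * 2^(k-1) := by
      conv_lhs => rw [show k = (k-1) + 1 by omega]
      ring
    rw [this]; ring
  have hdvd2 : ∀ h, (2:ℤ) ∣ S h := fun h => ⟨_, hfactor h⟩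
  have hdvd4 : ∀ h ∈ B, (4:ℤ) ∣ S h := by
    intro h hh
    rw [hB, Finset.mem_filter] at hh
    have h2 : ((2:ℕ):ℤ) ∣ ((2:ℤ)^(k-1) - W h) := by
      rw [← ZMod.intCast_zmod_eq_zero_iff_dvd]
      push_cast
      rw [hWcast h, hh.2, hc]
      push_cast
      ring
    obtain ⟨m, hm⟩ := h2
    refine ⟨m, ?_⟩
    rw [hfactor h, show ((2:ℤ)^(k-1) - W h) = ((2:ℕ):ℤ) * m from hm]
    push_cast
    ring
  -- lower bound on the cardinality of B
  have hcardB : 2^(p-1) ≤ B.card := by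
    by_cases hσ0 : σ = 0
    · -- then k ≥ 2 (if k = 1, σ ≠ 0), and c = 0, so B = univ
      have hk2' : 2 ≤ k := by
        by_contra hk'
        have hk1' : k = 1 := by omega
        obtain ⟨a, b, hab, habs⟩ := Finset.card_eq_two.mp (by rw [hα, hk1']; rfl)
        apply hab
        have : a + b = 0 := by
          rw [← hσ0, hσdef, habs, Finset.sum_pair hab]
        have h2 : a + (b + b) = (a + b) + b := by ring
        rw [add_self, this] at h2
        simpa using h2
      have hc0 : c = 0 := by
        rw [hc, ZMod.natCast_eq_zero_iff]
        exact dvd_pow_self 2 (by omega)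
      have : B = Finset.univ := by
        rw [hB]
        ext h
        simp [hσ0, show bf (0 : Fin p → ZMod 2) h = 0 by simp [bf], hc0]
      rw [this, Finset.card_univ, cardV]
      exact Nat.pow_le_pow_right (by norm_num) (by omega)
    · obtain ⟨δ, hδ⟩ := exists_delta σ hσ0
      have hbij : ∀ c' : ZMod 2,
          (Finset.univ.filter (fun h => bf σ h = c')).card
            = (Finset.univ.filter (fun h => bf σ h = c' + 1)).card := by
        intro c'
        apply Finset.card_bij' (fun h _ => h + δ) (fun h _ => h + δ)
        · intro a ha
          simp only [Finset.mem_filter, Finset.mem_univ, true_and] at ha ⊢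
          rw [bf_add_right, hδ, ha]
        · intro a ha
          simp only [Finset.mem_filter, Finset.mem_univ, true_and] at ha ⊢
          rw [bf_add_right, hδ, ha]
          exact (show ∀ x : ZMod 2, x + 1 + 1 = x by decide) c'
        · intro a _
          show a + δ + δ = a
          rw [add_assoc, add_self, add_zero]
        · intro a _
          show a + δ + δ = a
          rw [add_assoc, add_self, add_zero]
      have hsplit : (Finset.univ.filter (fun h => bf σ h = c)).card
          + (Finset.univ.filter (fun h => bf σ h = c + 1)).card = 2^p := by
        have hneg : Finset.univ.filter (fun h => ¬ bf σ h = c)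
            = Finset.univ.filter (fun h => bf σ h = c + 1) := by
          apply Finset.filter_congr
          intro h _
          constructor
          · intro hx
            exact (show ∀ x y : ZMod 2, x ≠ y → x = y + 1 by decide) _ _ hx
          · intro hx
            rw [hx]
            exact (show ∀ y : ZMod 2, y + 1 ≠ y by decide) c
        rw [← hneg, Finset.card_filter_add_card_filter_not,
          Finset.card_univ, cardV]
      have h2p : 2^p = 2 * 2^(p-1) := by
        conv_lhs => rw [show p = (p-1) + 1 by omega]
        ring
      have hB' : B.card = (Finset.univ.filter (fun h => bf σ h = c)).card := rfl
      have := hbij c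
      omega
  -- final counting
  have hbound : ∀ h, (if h ∈ B then (16:ℤ) else 4) ≤ S h ^ 2 := by
    intro h
    split
    · exact sq_ge_sixteen _ (hdvd4 h (by assumption)) (hno h)
    · exact sq_ge_four _ (hdvd2 h) (hno h)
  have hsum : ∑ h, (if h ∈ B then (16:ℤ) else 4) ≤ ∑ h, S h ^ 2 :=
    Finset.sum_le_sum (fun h _ => hbound h)
  have hPars : ∑ h, S h ^ 2 = 2^p * 2^k := by
    rw [hS, parseval α, hα]
    push_cast
    ring
  have hLHS : ∑ h, (if h ∈ B then (16:ℤ) else 4) = 12 * B.card + 4 * 2^p := by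
    have : ∀ h : Fin p → ZMod 2,
        (if h ∈ B then (16:ℤ) else 4) = (if h ∈ B then (12:ℤ) else 0) + 4 := by
      intro h; split <;> norm_num
    rw [Finset.sum_congr rfl (fun h _ => this h), Finset.sum_add_distrib]
    rw [Finset.sum_ite_mem, Finset.univ_inter, Finset.sum_const, Finset.sum_const,
      Finset.card_univ, cardV]
    push_cast
    ring
  rw [hPars, hLHS] at hsum
  have h2k8 : (2:ℤ)^k ≤ 8 := by
    calc (2:ℤ)^k ≤ 2^3 := pow_le_pow_right₀ (by norm_num) hk3
    _ = 8 := by norm_num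
  have hcardB' : (2:ℤ)^(p-1) ≤ (B.card : ℤ) := by exact_mod_cast hcardB
  have h2p' : (2:ℤ)^p = 2 * 2^(p-1) := by
    conv_lhs => rw [show p = (p-1) + 1 by omega]
    ring
  have hpos : (0:ℤ) < 2^p := by positivity
  nlinarith [hpos, hcardB', h2k8, hsum, h2p']
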